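/- In the glued Bratteli diagram construction described below, fix k ≥ 1 and β ∈ I_k. For nonzero ψ ∈ lim_j A^{(k,j)} let ψ̄ be the minimal element of lim_j A^(j)(β) agreeing with ψ on the vertices of Br^k (i.e. the unique element satisfying ψ̄^{k+i}_u = ψ^i_u for all u ∈ Br^k_i, vanishing at all vertices outside Br^0 ∪ Br^k, and dominated by every φ ∈ lim_j A^(j)(β) with φ^{k+i}_u ≥ ψ^i_u for all u ∈ Br^k_i), and set 0̄ = 0. Then the map lim_j A^{(k,j)} ∋ ψ ↦ ψ̄ ∈ lim_j A^(j)(β) is injective, continuous, and affine (it preserves convex combinations). -/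

import Mathlib

open scoped BigOperators
noncomputable section

/-- The inverse limit `lim_j A^(j)` of a projective matrix system. -/
def InvLimit {L : ℕ → Type} [∀ n, Fintype (L n)]
    (A : ∀ n, L n → L (n+1) → ℝ) : Set (∀ n, L n → ℝ) :=
  {ψ | (∀ n v, 0 ≤ ψ n v) ∧ ∀ n v, ψ n v = ∑ w, A n v w * ψ (n+1) w}

/-- `Ncnt B M v0k k i x` is the number `N(k)_x` of directed paths in the Bratteli
diagram `Br^k` (vertex sets `B k i`, multiplicities `M k i`, top vertex `v0k k`)
from the top vertex to the vertex `x` at level `i`. -/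
def Ncnt (B : ℕ → ℕ → Finset ℕ) (M : ℕ → ℕ → ℕ → ℕ → ℕ) (v0k : ℕ → ℕ)
    (k : ℕ) : ℕ → ℕ → ℝ
  | 0, x => if x = v0k k then 1 else 0
  | i+1, y => ∑ x ∈ B k i, Ncnt B M v0k k i x * (M k i x y : ℝ)

/-- Level `n` of the glued Bratteli diagram `Br`: the disjoint union of
`Br^0_n` and of `Br^k_{n-k}` for `1 ≤ k ≤ n`; a vertex is a pair
`(k, x)` with `x ∈ Br^k_{n-k}`. -/
def GV (B : ℕ → ℕ → Finset ℕ) (n : ℕ) : Finset (ℕ × ℕ) :=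
  ({0} ×ˢ B 0 n) ∪ (Finset.range n).biUnion fun k => {k+1} ×ˢ B (k+1) (n - (k+1))

/-- `κ(2j) = j`, `κ(2j+1) = -j`. -/
def kappa (i : ℕ) : ℝ := if Even i then ((i / 2 : ℕ) : ℝ) else -((i / 2 : ℕ) : ℝ)

/-- The entries of the matrix `A^(n+1)(β)` of the glued diagram, on raw vertex
pairs: within `Br^0` and within each `Br^k` the arrows have potential `0`, and
there are `m k i u` additional arrows with potential `κ(i)` from the chosen
vertex `W n = w_n ∈ Br^0_n` to each vertex `u ∈ Br^k_i` placed at level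
`n+1 = k+i` of the glued diagram. -/
def GAraw (M : ℕ → ℕ → ℕ → ℕ → ℕ) (m : ℕ → ℕ → ℕ → ℕ) (W : ℕ → ℕ)
    (β : ℝ) (n : ℕ) (p q : ℕ × ℕ) : ℝ :=
  if p.1 = 0 ∧ q.1 = 0 then (M 0 n p.2 q.2 : ℝ)
  else if p.1 = 0 ∧ 1 ≤ q.1 then
    (if p.2 = W n then (m q.1 (n + 1 - q.1) q.2 : ℝ) *
      Real.exp (-β * kappa (n + 1 - q.1)) else 0)
  else if p.1 = q.1 ∧ 1 ≤ p.1 then (M p.1 (n - p.1) p.2 q.2 : ℝ)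
  else 0

/-- The projective matrix system `{A^(j)(β)}` of the glued Bratteli diagram. -/
def GAmat (B : ℕ → ℕ → Finset ℕ) (M : ℕ → ℕ → ℕ → ℕ → ℕ) (m : ℕ → ℕ → ℕ → ℕ)
    (W : ℕ → ℕ) (β : ℝ) (n : ℕ) : ↥(GV B n) → ↥(GV B (n+1)) → ℝ :=
  fun p q => GAraw M m W β n p.val q.val

/-- The projective matrix system `{A^{(k,j)}}` of the component diagram `Br^k`
(zero potential, i.e. plain multiplicities). -/
def CompMat (B : ℕ → ℕ → Finset ℕ) (M : ℕ → ℕ → ℕ → ℕ → ℕ) (k : ℕ) :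
    ∀ i : ℕ, ↥(B k i) → ↥(B k (i+1)) → ℝ :=
  fun i x y => (M k i x.val y.val : ℝ)

/-! ## Auxiliary definitions -/

section Aux

variable (B : ℕ → ℕ → Finset ℕ) (M : ℕ → ℕ → ℕ → ℕ → ℕ) (v0k W : ℕ → ℕ)
  (m : ℕ → ℕ → ℕ → ℕ) (s t : ℕ → ℕ → ℝ) (k : ℕ) (β : ℝ)

/-- extension of `ψ` to all of `ℕ` by junk value 0. -/
def psit (ψ : ∀ i, ↥(B k i) → ℝ) (i u : ℕ) : ℝ :=
  if h : u ∈ B k i then ψ i ⟨u, h⟩ else 0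

/-- number of paths in `Br^0` from `v` at level `n` to `W (n+d)` at level `n+d`. -/
def Pc : ℕ → ℕ → ℕ → ℝ
  | n, v, 0 => if v = W n then 1 else 0
  | n, v, d+1 => ∑ w ∈ B 0 (n+1), (M 0 n v w : ℝ) * Pc (n+1) w d

/-- weighted entry sum into `Br^k` placed at glued level `ℓ+1`. -/
def Sv (ψ : ∀ i, ↥(B k i) → ℝ) (ℓ : ℕ) : ℝ :=
  if k ≤ ℓ + 1 then
    ∑ u ∈ B k (ℓ + 1 - k), (m k (ℓ + 1 - k) u : ℝ) *
      Real.exp (-β * kappa (ℓ + 1 - k)) * psit B k ψ (ℓ + 1 - k) u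
  else 0

/-- value of the minimal extension at `Br^0` vertices. -/
def Tv (ψ : ∀ i, ↥(B k i) → ℝ) (n v : ℕ) : ℝ :=
  ∑' d : ℕ, Pc B M W n v d * Sv B m k β ψ (n + d)

/-- the minimal extension, on raw vertex pairs. -/
def candraw (ψ : ∀ i, ↥(B k i) → ℝ) (n : ℕ) (q : ℕ × ℕ) : ℝ :=
  if q.1 = k then psit B k ψ (n - k) q.2
  else if q.1 = 0 then Tv B M W m k β ψ n q.2
  else 0

/-- summable majorant sequence. -/
def cseq (ℓ : ℕ) : ℝ :=
  if ℓ + 1 < k then 0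
  else if ℓ + 1 = k then Ncnt B M v0k 0 (k-1) (W (k-1))
  else if Even (ℓ + 1 - k) then
    t k ((ℓ + 1 - k)/2) * Real.exp (-(((ℓ + 1 - k)/2 : ℕ) : ℝ) * β)
  else s k ((ℓ + 1 - k)/2 + 1) * Real.exp ((((ℓ + 1 - k)/2 : ℕ) : ℝ) * β)

end Aux

section Lemmas

variable {B : ℕ → ℕ → Finset ℕ} {M : ℕ → ℕ → ℕ → ℕ → ℕ} {v0k W : ℕ → ℕ}
  {m : ℕ → ℕ → ℕ → ℕ} {s t : ℕ → ℕ → ℝ} {k : ℕ} {β : ℝ}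

lemma mem_GV_iff {n : ℕ} {p : ℕ × ℕ} :
    p ∈ GV B n ↔ (p.1 = 0 ∧ p.2 ∈ B 0 n) ∨ (1 ≤ p.1 ∧ p.1 ≤ n ∧ p.2 ∈ B p.1 (n - p.1)) := by
  obtain ⟨a, x⟩ := p
  simp only [GV, Finset.mem_union, Finset.mem_product, Finset.mem_singleton,
    Finset.mem_biUnion, Finset.mem_range]
  constructor
  · rintro (⟨h0, hx⟩ | ⟨j, hj, h1, hx⟩)
    · exact Or.inl ⟨h0, hx⟩
    · subst h1; exact Or.inr ⟨by omega, by omega, hx⟩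
  · rintro (⟨h0, hx⟩ | ⟨h1, h2, hx⟩)
    · exact Or.inl ⟨h0, hx⟩
    · refine Or.inr ⟨a - 1, by omega, by omega, ?_⟩
      have : a - 1 + 1 = a := by omega
      rw [this]; exact hx

lemma Ncnt_nat (k i x : ℕ) : ∃ q : ℕ, Ncnt B M v0k k i x = (q : ℝ) := by
  induction i generalizing x with
  | zero =>
    by_cases h : x = v0k k
    · exact ⟨1, by simp [Ncnt, h]⟩
    · exact ⟨0, by simp [Ncnt, h]⟩
  | succ i ih =>
    choose f hf using ih
    refine ⟨∑ y ∈ B k i, f y * M k i y x, ?_⟩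
    rw [Ncnt]
    push_cast
    exact Finset.sum_congr rfl fun y _ => by rw [hf y]

lemma Ncnt_nonneg (k i x : ℕ) : 0 ≤ Ncnt B M v0k k i x := by
  obtain ⟨q, hq⟩ := Ncnt_nat (v0k := v0k) k i x
  rw [hq]; positivity

lemma Ncnt_one_le {k i x : ℕ} (h : 0 < Ncnt B M v0k k i x) :
    1 ≤ Ncnt B M v0k k i x := by
  obtain ⟨q, hq⟩ := Ncnt_nat (v0k := v0k) k i x
  rw [hq] at h ⊢
  have hq' : 0 < q := by exact_mod_cast h
  exact_mod_cast hq'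

lemma kappa_zero : kappa 0 = 0 := by simp [kappa]

lemma kappa_even (j : ℕ) : kappa (2*j+2) = ((j : ℝ) + 1) := by
  have he : Even (2*j+2) := ⟨j+1, by ring⟩
  have : (2*j+2)/2 = j+1 := by omega
  simp [kappa, he, this]

lemma kappa_odd (j : ℕ) : kappa (2*j+1) = -(j : ℝ) := by
  have he : ¬ Even (2*j+1) := by simp [Nat.even_add_one, parity_simps]
  have : (2*j+1)/2 = j := by omega
  simp [kappa, he, this]

lemma Pc_nonneg (n v d : ℕ) : 0 ≤ Pc B M W n v d := by
  induction d generalizing n v with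
  | zero => rw [Pc]; positivity
  | succ d ih =>
    rw [Pc]
    exact Finset.sum_nonneg fun w _ => mul_nonneg (by positivity) (ih _ _)

end Lemmas

section Lemmas2

variable {B : ℕ → ℕ → Finset ℕ} {M : ℕ → ℕ → ℕ → ℕ → ℕ} {v0k W : ℕ → ℕ}
  {m : ℕ → ℕ → ℕ → ℕ} {s t : ℕ → ℕ → ℝ} {k : ℕ} {β : ℝ}

lemma Pc_sum_eq (hW : ∀ j, W j ∈ B 0 j) :
    ∀ d n, ∑ v ∈ B 0 n, Ncnt B M v0k 0 n v * Pc B M W n v d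
      = Ncnt B M v0k 0 (n + d) (W (n + d)) := by
  intro d
  induction d with
  | zero =>
    intro n
    simp only [Pc, Nat.add_zero, mul_ite, mul_one, mul_zero]
    rw [Finset.sum_ite_eq' (B 0 n) (W n) (fun v => Ncnt B M v0k 0 n v)]
    simp [hW n]
  | succ d ih =>
    intro n
    have swap : ∑ v ∈ B 0 n, Ncnt B M v0k 0 n v * Pc B M W n v (d+1)
        = ∑ w ∈ B 0 (n+1), Ncnt B M v0k 0 (n+1) w * Pc B M W (n+1) w d := by
      simp only [Pc, Finset.mul_sum]
      rw [Finset.sum_comm]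
      refine Finset.sum_congr rfl fun w _ => ?_
      rw [Ncnt, Finset.sum_mul]
      exact Finset.sum_congr rfl fun v _ => by ring
    rw [swap, ih (n+1), show n+1+d = n+(d+1) from by omega]

lemma Pc_le (hW : ∀ j, W j ∈ B 0 j)
    (hNpos : ∀ k i x, x ∈ B k i → 0 < Ncnt B M v0k k i x)
    {n v : ℕ} (hv : v ∈ B 0 n) (d : ℕ) :
    Pc B M W n v d ≤ Ncnt B M v0k 0 (n + d) (W (n + d)) := by
  have h1 : Pc B M W n v d ≤ Ncnt B M v0k 0 n v * Pc B M W n v d := by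
    nth_rewrite 1 [← one_mul (Pc B M W n v d)]
    exact mul_le_mul_of_nonneg_right (Ncnt_one_le (hNpos 0 n v hv)) (Pc_nonneg n v d)
  refine h1.trans ?_
  rw [← Pc_sum_eq (v0k := v0k) hW d n]
  exact Finset.single_le_sum
    (fun w _ => mul_nonneg (Ncnt_nonneg 0 n w) (Pc_nonneg n w d)) hv

/-! lemmas about `ψ ∈ InvLimit (CompMat B M k)` -/

lemma psit_nonneg {ψ : ∀ i, ↥(B k i) → ℝ} (hψ : ψ ∈ InvLimit (CompMat B M k))
    (i u : ℕ) : 0 ≤ psit B k ψ i u := by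
  unfold psit
  split
  · exact hψ.1 i _
  · exact le_refl 0

lemma psit_rec {ψ : ∀ i, ↥(B k i) → ℝ} (hψ : ψ ∈ InvLimit (CompMat B M k))
    {i u : ℕ} (hu : u ∈ B k i) :
    psit B k ψ i u = ∑ u' ∈ B k (i+1), (M k i u u' : ℝ) * psit B k ψ (i+1) u' := by
  have h := hψ.2 i ⟨u, hu⟩
  rw [psit, dif_pos hu, h]
  rw [← Finset.sum_coe_sort (B k (i+1)) (fun x => (M k i u x : ℝ) * psit B k ψ (i+1) x)]
  refine Finset.sum_congr rfl fun w _ => ?_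
  rw [CompMat, psit, dif_pos w.prop]

lemma psit_top_sum (hB0 : ∀ k, B k 0 = {v0k k})
    {ψ : ∀ i, ↥(B k i) → ℝ} (hψ : ψ ∈ InvLimit (CompMat B M k)) (i : ℕ) :
    ∑ u ∈ B k i, Ncnt B M v0k k i u * psit B k ψ i u = psit B k ψ 0 (v0k k) := by
  induction i with
  | zero =>
    rw [hB0 k, Finset.sum_singleton]
    simp [Ncnt]
  | succ i ih =>
    rw [← ih]
    have : ∀ u ∈ B k i, Ncnt B M v0k k i u * psit B k ψ i u
        = ∑ u' ∈ B k (i+1), Ncnt B M v0k k i u * ((M k i u u' : ℝ) * psit B k ψ (i+1) u') := by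
      intro u hu
      rw [psit_rec hψ hu, Finset.mul_sum]
    rw [Finset.sum_congr rfl this, Finset.sum_comm]
    refine Finset.sum_congr rfl fun u' _ => ?_
    rw [Ncnt, Finset.sum_mul]
    exact Finset.sum_congr rfl fun u _ => by ring

lemma Sv_nonneg {ψ : ∀ i, ↥(B k i) → ℝ} (hψ : ψ ∈ InvLimit (CompMat B M k))
    (ℓ : ℕ) : 0 ≤ Sv B m k β ψ ℓ := by
  unfold Sv
  split
  · exact Finset.sum_nonneg fun u _ => mul_nonneg (by positivity) (psit_nonneg hψ _ _)
  · exact le_refl 0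

end Lemmas2
section Lemmas3

variable {B : ℕ → ℕ → Finset ℕ} {M : ℕ → ℕ → ℕ → ℕ → ℕ} {v0k W : ℕ → ℕ}
  {m : ℕ → ℕ → ℕ → ℕ} {s t : ℕ → ℕ → ℝ} {k : ℕ} {β : ℝ}

lemma Sv_bound (hB0 : ∀ k, B k 0 = {v0k k}) (hk : 1 ≤ k)
    (hNpos : ∀ k i x, x ∈ B k i → 0 < Ncnt B M v0k k i x)
    (hW : ∀ j, W j ∈ B 0 j)
    (hm1 : ∀ k, 1 ≤ k → m k 0 (v0k k) = 1)
    (hmt : ∀ k j u, u ∈ B (k+1) (2*j+2) →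
      (1/2) * (t (k+1) (j+1) * Ncnt B M v0k (k+1) (2*j+2) u
          / Ncnt B M v0k 0 (k+2*j+2) (W (k+2*j+2))) ≤ (m (k+1) (2*j+2) u : ℝ) ∧
      (m (k+1) (2*j+2) u : ℝ) ≤ t (k+1) (j+1) * Ncnt B M v0k (k+1) (2*j+2) u
          / Ncnt B M v0k 0 (k+2*j+2) (W (k+2*j+2)))
    (hms : ∀ k j u, u ∈ B (k+1) (2*j+1) →
      (1/2) * (s (k+1) (j+1) * Ncnt B M v0k (k+1) (2*j+1) u
          / Ncnt B M v0k 0 (k+2*j+1) (W (k+2*j+1))) ≤ (m (k+1) (2*j+1) u : ℝ) ∧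
      (m (k+1) (2*j+1) u : ℝ) ≤ s (k+1) (j+1) * Ncnt B M v0k (k+1) (2*j+1) u
          / Ncnt B M v0k 0 (k+2*j+1) (W (k+2*j+1)))
    {ψ : ∀ i, ↥(B k i) → ℝ} (hψ : ψ ∈ InvLimit (CompMat B M k)) (ℓ : ℕ) :
    Ncnt B M v0k 0 ℓ (W ℓ) * Sv B m k β ψ ℓ
      ≤ cseq B M v0k W s t k β ℓ * psit B k ψ 0 (v0k k) := by
  have hN0pos : 0 < Ncnt B M v0k 0 ℓ (W ℓ) := hNpos 0 ℓ (W ℓ) (hW ℓ)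
  by_cases h1 : ℓ + 1 < k
  · rw [Sv, if_neg (by omega), cseq, if_pos h1]
    simp
  by_cases h2 : ℓ + 1 = k
  · -- i = 0 case
    have hi : ℓ + 1 - k = 0 := by omega
    rw [Sv, if_pos (by omega), hi, cseq, if_neg h1, if_pos h2, hB0 k,
      Finset.sum_singleton, hm1 k hk, kappa_zero]
    have hl : k - 1 = ℓ := by omega
    rw [hl]
    simp
  · -- i ≥ 1 
    have hkl : k ≤ ℓ + 1 := by omega
    set i := ℓ + 1 - k with hidef
    have hi1 : 1 ≤ i := by omega
    rw [Sv, if_pos hkl, cseq, if_neg h1, if_neg h2, mul_comm (Ncnt B M v0k 0 ℓ (W ℓ)), Finset.sum_mul, ← hidef]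
    obtain ⟨k0, hk0⟩ : ∃ k0, k = k0 + 1 := ⟨k - 1, by omega⟩
    rcases Nat.even_or_odd i with he | ho
    · -- even : i = 2j+2
      obtain ⟨r, hr⟩ := he
      obtain ⟨j, hj⟩ : ∃ j, i = 2*j+2 := ⟨r - 1, by omega⟩
      rw [if_pos (show Even (ℓ + 1 - k) from ⟨r, hr⟩)]
      have hlval : k0 + 2*j + 2 = ℓ := by omega
      have hhalf : i / 2 = j + 1 := by omega
      rw [hhalf]
      have key : ∀ u ∈ B k i, Ncnt B M v0k 0 ℓ (W ℓ) * (m k i u : ℝ) ≤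
          t k (j+1) * Ncnt B M v0k k i u := by
        intro u hu
        have := (hmt k0 j u (by rw [← hk0, ← hj]; exact hu)).2
        rw [show k0 + 2*j+2 = ℓ from by omega, ← hk0, ← hj] at this
        rw [mul_comm]
        exact (le_div_iff₀ hN0pos).mp this
      calc ∑ u ∈ B k i, (m k i u : ℝ) * Real.exp (-β * kappa i) * psit B k ψ i u
            * Ncnt B M v0k 0 ℓ (W ℓ)
          ≤ ∑ u ∈ B k i, t k (j+1) * Ncnt B M v0k k i u * Real.exp (-β * kappa i)
            * psit B k ψ i u := by
            refine Finset.sum_le_sum fun u hu => ?_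
            have h3 := key u hu
            have h4 : (0:ℝ) ≤ Real.exp (-β * kappa i) * psit B k ψ i u :=
              mul_nonneg (le_of_lt (Real.exp_pos _)) (psit_nonneg hψ _ _)
            calc (m k i u : ℝ) * Real.exp (-β * kappa i) * psit B k ψ i u
                * Ncnt B M v0k 0 ℓ (W ℓ)
                = (Ncnt B M v0k 0 ℓ (W ℓ) * (m k i u : ℝ))
                  * (Real.exp (-β * kappa i) * psit B k ψ i u) := by ring
              _ ≤ (t k (j+1) * Ncnt B M v0k k i u)
                  * (Real.exp (-β * kappa i) * psit B k ψ i u) :=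
                  mul_le_mul_of_nonneg_right h3 h4
              _ = t k (j+1) * Ncnt B M v0k k i u * Real.exp (-β * kappa i)
                  * psit B k ψ i u := by ring
        _ = t k (j+1) * Real.exp (-((j:ℝ)+1) * β) * psit B k ψ 0 (v0k k) := by
            rw [← psit_top_sum hB0 hψ i, Finset.mul_sum]
            refine Finset.sum_congr rfl fun u _ => ?_
            rw [hj, kappa_even j]
            ring_nf
        _ = t k (j+1) * Real.exp (-(((j:ℕ):ℝ)+1) * β) * psit B k ψ 0 (v0k k) := by norm_num
        _ ≤ _ := by
            rw [show (((j+1:ℕ)):ℝ) = ((j:ℕ):ℝ) + 1 from by push_cast; ring]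
    · -- odd : i = 2j+1
      obtain ⟨j, hj⟩ := ho
      rw [if_neg (by rw [hj]; simp [Nat.even_add_one, parity_simps])]
      have hhalf : i / 2 = j := by omega
      rw [hhalf]
      have key : ∀ u ∈ B k i, Ncnt B M v0k 0 ℓ (W ℓ) * (m k i u : ℝ) ≤
          s k (j+1) * Ncnt B M v0k k i u := by
        intro u hu
        have := (hms k0 j u (by rw [← hk0, ← hj]; exact hu)).2
        rw [show k0 + 2*j+1 = ℓ from by omega, ← hk0, ← hj] at this
        rw [mul_comm]
        exact (le_div_iff₀ hN0pos).mp this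
      calc ∑ u ∈ B k i, (m k i u : ℝ) * Real.exp (-β * kappa i) * psit B k ψ i u
            * Ncnt B M v0k 0 ℓ (W ℓ)
          ≤ ∑ u ∈ B k i, s k (j+1) * Ncnt B M v0k k i u * Real.exp (-β * kappa i)
            * psit B k ψ i u := by
            refine Finset.sum_le_sum fun u hu => ?_
            have h3 := key u hu
            have h4 : (0:ℝ) ≤ Real.exp (-β * kappa i) * psit B k ψ i u :=
              mul_nonneg (le_of_lt (Real.exp_pos _)) (psit_nonneg hψ _ _)
            calc (m k i u : ℝ) * Real.exp (-β * kappa i) * psit B k ψ i u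
                * Ncnt B M v0k 0 ℓ (W ℓ)
                = (Ncnt B M v0k 0 ℓ (W ℓ) * (m k i u : ℝ))
                  * (Real.exp (-β * kappa i) * psit B k ψ i u) := by ring
              _ ≤ (s k (j+1) * Ncnt B M v0k k i u)
                  * (Real.exp (-β * kappa i) * psit B k ψ i u) :=
                  mul_le_mul_of_nonneg_right h3 h4
              _ = s k (j+1) * Ncnt B M v0k k i u * Real.exp (-β * kappa i)
                  * psit B k ψ i u := by ring
        _ = s k (j+1) * Real.exp (((j:ℕ):ℝ) * β) * psit B k ψ 0 (v0k k) := by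
            rw [← psit_top_sum hB0 hψ i, Finset.mul_sum]
            refine Finset.sum_congr rfl fun u _ => ?_
            rw [hj, kappa_odd j]
            ring_nf
        _ ≤ _ := le_refl _

end Lemmas3
section Lemmas4

variable {B : ℕ → ℕ → Finset ℕ} {M : ℕ → ℕ → ℕ → ℕ → ℕ} {v0k W : ℕ → ℕ}
  {m : ℕ → ℕ → ℕ → ℕ} {s t : ℕ → ℕ → ℝ} {k : ℕ} {β : ℝ}

lemma cseq_nonneg (hk : 1 ≤ k)
    (hspos : ∀ k j, 1 ≤ k → 1 ≤ j → 0 < s k j)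
    (htpos : ∀ k j, 1 ≤ k → 1 ≤ j → 0 < t k j) (ℓ : ℕ) :
    0 ≤ cseq B M v0k W s t k β ℓ := by
  unfold cseq
  by_cases h1 : ℓ + 1 < k
  · rw [if_pos h1]
  by_cases h2 : ℓ + 1 = k
  · rw [if_neg h1, if_pos h2]; exact Ncnt_nonneg 0 (k-1) (W (k-1))
  by_cases h3 : Even (ℓ + 1 - k)
  · rw [if_neg h1, if_neg h2, if_pos h3]
    obtain ⟨r, hr⟩ := h3
    exact mul_nonneg (htpos k _ hk (by omega)).le (Real.exp_pos _).le
  · rw [if_neg h1, if_neg h2, if_neg h3]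
    exact mul_nonneg (hspos k _ hk (by omega)).le (Real.exp_pos _).le

lemma cseq_summable (hk : 1 ≤ k)
    (hs : Summable fun j : ℕ => s k (j+1) * Real.exp (((j:ℝ)+1) * β))
    (ht : Summable fun j : ℕ => t k (j+1) * Real.exp (-(((j:ℝ)+1) * β))) :
    Summable (cseq B M v0k W s t k β) := by
  rw [← summable_nat_add_iff (k-1)]
  apply Summable.even_add_odd
  · -- even indices
    rw [← summable_nat_add_iff 1]
    have : ∀ n : ℕ, cseq B M v0k W s t k β (2*(n+1) + (k-1))
        = t k (n+1) * Real.exp (-(((n:ℝ)+1) * β)) := by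
      intro n
      have h1 : ¬ (2*(n+1) + (k-1) + 1 < k) := by omega
      have h2 : ¬ (2*(n+1) + (k-1) + 1 = k) := by omega
      have h3 : 2*(n+1) + (k-1) + 1 - k = 2*n+2 := by omega
      rw [cseq, if_neg h1, if_neg h2, h3, if_pos ⟨n+1, by omega⟩,
        show (2*n+2)/2 = n+1 from by omega]
      congr 1
      rw [Real.exp_eq_exp]
      push_cast; ring
    exact ht.congr fun n => (this n).symm
  · -- odd indices
    have : ∀ n : ℕ, cseq B M v0k W s t k β (2*n+1 + (k-1))
        = s k (n+1) * Real.exp ((n:ℝ) * β) := by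
      intro n
      have h1 : ¬ (2*n+1 + (k-1) + 1 < k) := by omega
      have h2 : ¬ (2*n+1 + (k-1) + 1 = k) := by omega
      have h3 : 2*n+1 + (k-1) + 1 - k = 2*n+1 := by omega
      have h4 : ¬ Even (2*n+1) := by simp [Nat.even_add_one, parity_simps]
      rw [cseq, if_neg h1, if_neg h2, h3, if_neg h4,
        show (2*n+1)/2 = n from by omega]
    have hs' : Summable fun j : ℕ => s k (j+1) * Real.exp ((j:ℝ) * β) := by
      have := hs.mul_right (Real.exp (-β))
      refine this.congr fun j => ?_
      rw [mul_assoc, ← Real.exp_add]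
      congr 2
      ring
    exact hs'.congr fun n => (this n).symm

lemma g_bound (hB0 : ∀ k, B k 0 = {v0k k}) (hk : 1 ≤ k)
    (hNpos : ∀ k i x, x ∈ B k i → 0 < Ncnt B M v0k k i x)
    (hW : ∀ j, W j ∈ B 0 j)
    (hm1 : ∀ k, 1 ≤ k → m k 0 (v0k k) = 1)
    (hmt : ∀ k j u, u ∈ B (k+1) (2*j+2) →
      (1/2) * (t (k+1) (j+1) * Ncnt B M v0k (k+1) (2*j+2) u
          / Ncnt B M v0k 0 (k+2*j+2) (W (k+2*j+2))) ≤ (m (k+1) (2*j+2) u : ℝ) ∧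
      (m (k+1) (2*j+2) u : ℝ) ≤ t (k+1) (j+1) * Ncnt B M v0k (k+1) (2*j+2) u
          / Ncnt B M v0k 0 (k+2*j+2) (W (k+2*j+2)))
    (hms : ∀ k j u, u ∈ B (k+1) (2*j+1) →
      (1/2) * (s (k+1) (j+1) * Ncnt B M v0k (k+1) (2*j+1) u
          / Ncnt B M v0k 0 (k+2*j+1) (W (k+2*j+1))) ≤ (m (k+1) (2*j+1) u : ℝ) ∧
      (m (k+1) (2*j+1) u : ℝ) ≤ s (k+1) (j+1) * Ncnt B M v0k (k+1) (2*j+1) u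
          / Ncnt B M v0k 0 (k+2*j+1) (W (k+2*j+1)))
    {ψ : ∀ i, ↥(B k i) → ℝ} (hψ : ψ ∈ InvLimit (CompMat B M k))
    {n v : ℕ} (hv : v ∈ B 0 n) (d : ℕ) :
    Pc B M W n v d * Sv B m k β ψ (n + d)
      ≤ cseq B M v0k W s t k β (n + d) * psit B k ψ 0 (v0k k) := by
  calc Pc B M W n v d * Sv B m k β ψ (n + d)
      ≤ Ncnt B M v0k 0 (n+d) (W (n+d)) * Sv B m k β ψ (n + d) :=
        mul_le_mul_of_nonneg_right (Pc_le hW hNpos hv d) (Sv_nonneg hψ _)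
    _ ≤ _ := Sv_bound hB0 hk hNpos hW hm1 hmt hms hψ (n+d)

end Lemmas4
section Lemmas5

variable {B : ℕ → ℕ → Finset ℕ} {M : ℕ → ℕ → ℕ → ℕ → ℕ} {v0k W : ℕ → ℕ}
  {m : ℕ → ℕ → ℕ → ℕ} {s t : ℕ → ℕ → ℝ} {k : ℕ} {β : ℝ}

lemma g_summable
    (hNpos : ∀ k i x, x ∈ B k i → 0 < Ncnt B M v0k k i x)
    (hW : ∀ j, W j ∈ B 0 j)
    (hcs : Summable (cseq B M v0k W s t k β))
    {ψ : ∀ i, ↥(B k i) → ℝ} (hψ : ψ ∈ InvLimit (CompMat B M k))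
    (hSb : ∀ ℓ, Ncnt B M v0k 0 ℓ (W ℓ) * Sv B m k β ψ ℓ
      ≤ cseq B M v0k W s t k β ℓ * psit B k ψ 0 (v0k k))
    {n v : ℕ} (hv : v ∈ B 0 n) :
    Summable (fun d => Pc B M W n v d * Sv B m k β ψ (n + d)) := by
  have hmaj : Summable (fun d => cseq B M v0k W s t k β (n + d) * psit B k ψ 0 (v0k k)) := by
    have h1 : Summable (fun d => cseq B M v0k W s t k β (d + n)) :=
      (summable_nat_add_iff n).2 hcs
    exact (h1.mul_right _).congr fun d => by rw [add_comm]
  refine Summable.of_nonneg_of_le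
    (fun d => mul_nonneg (Pc_nonneg n v d) (Sv_nonneg hψ _)) (fun d => ?_) hmaj
  calc Pc B M W n v d * Sv B m k β ψ (n + d)
      ≤ Ncnt B M v0k 0 (n+d) (W (n+d)) * Sv B m k β ψ (n + d) :=
        mul_le_mul_of_nonneg_right (Pc_le hW hNpos hv d) (Sv_nonneg hψ _)
    _ ≤ _ := hSb (n+d)

lemma Tv_nonneg {ψ : ∀ i, ↥(B k i) → ℝ} (hψ : ψ ∈ InvLimit (CompMat B M k))
    (n v : ℕ) : 0 ≤ Tv B M W m k β ψ n v :=
  tsum_nonneg fun d => mul_nonneg (Pc_nonneg n v d) (Sv_nonneg hψ _)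

lemma Tv_rec
    (hNpos : ∀ k i x, x ∈ B k i → 0 < Ncnt B M v0k k i x)
    (hW : ∀ j, W j ∈ B 0 j)
    (hcs : Summable (cseq B M v0k W s t k β))
    {ψ : ∀ i, ↥(B k i) → ℝ} (hψ : ψ ∈ InvLimit (CompMat B M k))
    (hSb : ∀ ℓ, Ncnt B M v0k 0 ℓ (W ℓ) * Sv B m k β ψ ℓ
      ≤ cseq B M v0k W s t k β ℓ * psit B k ψ 0 (v0k k))
    {n v : ℕ} (hv : v ∈ B 0 n) :
    Tv B M W m k β ψ n v
      = (∑ w ∈ B 0 (n+1), (M 0 n v w : ℝ) * Tv B M W m k β ψ (n+1) w)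
        + (if v = W n then Sv B m k β ψ n else 0) := by
  have hsum := g_summable hNpos hW hcs hψ hSb hv
  calc Tv B M W m k β ψ n v
      = Pc B M W n v 0 * Sv B m k β ψ (n + 0)
        + ∑' d, Pc B M W n v (d+1) * Sv B m k β ψ (n + (d+1)) :=
        Summable.tsum_eq_zero_add hsum
    _ = (if v = W n then Sv B m k β ψ n else 0)
        + ∑' d, ∑ w ∈ B 0 (n+1), (M 0 n v w : ℝ)
            * (Pc B M W (n+1) w d * Sv B m k β ψ ((n+1) + d)) := by
        congr 1
        · rw [Pc, add_zero, ite_mul, one_mul, zero_mul]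
        · refine tsum_congr fun d => ?_
          rw [Pc, Finset.sum_mul, show n + (d+1) = (n+1) + d from by omega]
          exact Finset.sum_congr rfl fun w _ => by ring
    _ = (if v = W n then Sv B m k β ψ n else 0)
        + ∑ w ∈ B 0 (n+1), (M 0 n v w : ℝ) * Tv B M W m k β ψ (n+1) w := by
        congr 1
        rw [Summable.tsum_finsetSum (fun w hw => ((g_summable hNpos hW hcs hψ hSb hw).mul_left _))]
        exact Finset.sum_congr rfl fun w hw => by rw [tsum_mul_left, Tv]
    _ = _ := by rw [add_comm]

lemma sum_GV_split (n : ℕ) (f : ℕ × ℕ → ℝ) :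
    ∑ q ∈ GV B (n+1), f q = (∑ w ∈ B 0 (n+1), f (0, w)) +
      ∑ j ∈ Finset.range (n+1), ∑ u ∈ B (j+1) (n - j), f (j+1, u) := by
  rw [GV, Finset.sum_union]
  · congr 1
    · rw [Finset.sum_product, Finset.sum_singleton]
    · rw [Finset.sum_biUnion]
      · refine Finset.sum_congr rfl fun j _ => ?_
        rw [Finset.sum_product, Finset.sum_singleton,
          show n + 1 - (j+1) = n - j from by omega]
      · intro x hx y hy hxy
        simp only [Function.onFun]
        refine Finset.disjoint_left.2 fun p hp hp' => ?_
        simp only [Finset.mem_product, Finset.mem_singleton] at hp hp'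
        exact hxy (by omega)
  · refine Finset.disjoint_left.2 fun p hp hp' => ?_
    simp only [Finset.mem_product, Finset.mem_singleton, Finset.mem_biUnion,
      Finset.mem_range] at hp hp'
    obtain ⟨j, _, hj, _⟩ := hp'
    omega

end Lemmas5
section Lemmas6

variable {B : ℕ → ℕ → Finset ℕ} {M : ℕ → ℕ → ℕ → ℕ → ℕ} {v0k W : ℕ → ℕ}
  {m : ℕ → ℕ → ℕ → ℕ} {s t : ℕ → ℕ → ℝ} {k : ℕ} {β : ℝ}

lemma cand_mem (hk : 1 ≤ k)
    (hNpos : ∀ k i x, x ∈ B k i → 0 < Ncnt B M v0k k i x)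
    (hW : ∀ j, W j ∈ B 0 j)
    (hcs : Summable (cseq B M v0k W s t k β))
    {ψ : ∀ i, ↥(B k i) → ℝ} (hψ : ψ ∈ InvLimit (CompMat B M k))
    (hSb : ∀ ℓ, Ncnt B M v0k 0 ℓ (W ℓ) * Sv B m k β ψ ℓ
      ≤ cseq B M v0k W s t k β ℓ * psit B k ψ 0 (v0k k)) :
    (fun n (p : ↥(GV B n)) => candraw B M W m k β ψ n p.val)
      ∈ InvLimit (GAmat B M m W β) := by
  constructor
  · intro n p
    dsimp only
    unfold candraw
    split
    · exact psit_nonneg hψ _ _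
    split
    · exact Tv_nonneg hψ _ _
    · exact le_refl 0
  · intro n p
    simp only [GAmat]
    rw [Finset.sum_coe_sort (GV B (n+1))
      (fun q => GAraw M m W β n p.val q * candraw B M W m k β ψ (n+1) q),
      sum_GV_split]
    rcases mem_GV_iff.1 p.prop with ⟨h0, hv⟩ | ⟨ha, hb, hvk⟩
    · -- p is a Br^0 vertex
      have hL : candraw B M W m k β ψ n p.val = Tv B M W m k β ψ n p.val.2 := by
        rw [candraw, if_neg (by omega), if_pos h0]
      have hfirst : ∀ w ∈ B 0 (n+1),
          GAraw M m W β n p.val (0, w) * candraw B M W m k β ψ (n+1) (0, w)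
          = (M 0 n p.val.2 w : ℝ) * Tv B M W m k β ψ (n+1) w := by
        intro w _
        rw [GAraw, if_pos ⟨h0, rfl⟩, candraw]
        simp [(show ¬ (0:ℕ) = k by omega)]
      rw [hL, Finset.sum_congr rfl hfirst]
      have hsecond : (∑ j ∈ Finset.range (n+1), ∑ u ∈ B (j+1) (n - j),
          GAraw M m W β n p.val (j+1, u) * candraw B M W m k β ψ (n+1) (j+1, u))
          = if p.val.2 = W n then Sv B m k β ψ n else 0 := by
        by_cases hvW : p.val.2 = W n
        · rw [if_pos hvW]
          by_cases hkn : k ≤ n + 1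
          · rw [Finset.sum_eq_single_of_mem (k-1) (Finset.mem_range.2 (by omega))]
            · have e1 : k - 1 + 1 = k := by omega
              have e2 : n - (k-1) = n + 1 - k := by omega
              rw [Sv, if_pos hkn, e1, e2]
              refine Finset.sum_congr rfl fun u hu => ?_
              rw [GAraw, if_neg (by rintro ⟨-, h⟩; omega),
                if_pos ⟨h0, by omega⟩, if_pos hvW, candraw]
              simp
            · intro j hj hne
              refine Finset.sum_eq_zero fun u hu => ?_
              rw [candraw]
              simp only
              rw [if_neg (by omega), if_neg (by omega), mul_zero]
          · rw [Sv, if_neg hkn]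
            refine Finset.sum_eq_zero fun j hj => Finset.sum_eq_zero fun u hu => ?_
            rw [candraw]
            simp only
            have hjr := Finset.mem_range.1 hj
            rw [if_neg (by omega), if_neg (by omega), mul_zero]
        · rw [if_neg hvW]
          refine Finset.sum_eq_zero fun j hj => Finset.sum_eq_zero fun u hu => ?_
          rw [GAraw, if_neg (by rintro ⟨-, h⟩; omega),
            if_pos ⟨h0, by omega⟩, if_neg hvW, zero_mul]
      rw [hsecond]
      exact Tv_rec hNpos hW hcs hψ hSb hv
    · -- p is a component vertex
      have hfirst : ∀ w ∈ B 0 (n+1),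
          GAraw M m W β n p.val (0, w) * candraw B M W m k β ψ (n+1) (0, w) = 0 := by
        intro w _
        rw [GAraw, if_neg (by rintro ⟨h, -⟩; omega), if_neg (by rintro ⟨h, -⟩; omega),
          if_neg (by rintro ⟨h, -⟩; omega), zero_mul]
      rw [Finset.sum_congr rfl hfirst, Finset.sum_const, smul_zero, zero_add]
      by_cases hpk : p.val.1 = k
      · have hL : candraw B M W m k β ψ n p.val = psit B k ψ (n - k) p.val.2 := by
          rw [candraw, if_pos hpk]
        rw [hL, Finset.sum_eq_single_of_mem (k-1) (Finset.mem_range.2 (by omega))]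
        · have e1 : k - 1 + 1 = k := by omega
          have e2 : n - (k-1) = n + 1 - k := by omega
          rw [e1, e2]
          have hrec := psit_rec hψ (show p.val.2 ∈ B k (n - k) from hpk ▸ hvk)
          rw [show n - k + 1 = n + 1 - k from by omega] at hrec
          rw [hrec]
          refine Finset.sum_congr rfl fun u hu => ?_
          rw [GAraw, if_neg (by rintro ⟨h, -⟩; omega), if_neg (by rintro ⟨h, -⟩; omega),
            if_pos ⟨(by simp [hpk] : (p.val.1 = ((k:ℕ), u).1)), ha⟩, candraw, hpk]
          simp
        · intro j hj hne
          refine Finset.sum_eq_zero fun u hu => ?_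
          rw [candraw]
          simp only
          rw [if_neg (by omega), if_neg (by omega), mul_zero]
      · have hL : candraw B M W m k β ψ n p.val = 0 := by
          rw [candraw, if_neg hpk, if_neg (by omega)]
        rw [hL]
        symm
        refine Finset.sum_eq_zero fun j hj => Finset.sum_eq_zero fun u hu => ?_
        by_cases hjk : j + 1 = k
        · rw [GAraw, if_neg (by rintro ⟨h, -⟩; omega), if_neg (by rintro ⟨h, -⟩; omega),
            if_neg (by rintro ⟨h, -⟩; omega), zero_mul]
        · rw [candraw]
          simp only
          rw [if_neg (by omega), if_neg (by omega), mul_zero]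

end Lemmas6
section Lemmas7

variable {B : ℕ → ℕ → Finset ℕ} {M : ℕ → ℕ → ℕ → ℕ → ℕ} {v0k W : ℕ → ℕ}
  {m : ℕ → ℕ → ℕ → ℕ} {s t : ℕ → ℕ → ℝ} {k : ℕ} {β : ℝ}

lemma GAraw_nonneg (n : ℕ) (p q : ℕ × ℕ) : 0 ≤ GAraw M m W β n p q := by
  unfold GAraw
  split_ifs <;> positivity

lemma cand_min (hk : 1 ≤ k)
    (hNpos : ∀ k i x, x ∈ B k i → 0 < Ncnt B M v0k k i x)
    (hW : ∀ j, W j ∈ B 0 j)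
    (hcs : Summable (cseq B M v0k W s t k β))
    {ψ : ∀ i, ↥(B k i) → ℝ} (hψ : ψ ∈ InvLimit (CompMat B M k))
    (hSb : ∀ ℓ, Ncnt B M v0k 0 ℓ (W ℓ) * Sv B m k β ψ ℓ
      ≤ cseq B M v0k W s t k β ℓ * psit B k ψ 0 (v0k k))
    (φ : ∀ n, ↥(GV B n) → ℝ) (hφ : φ ∈ InvLimit (GAmat B M m W β))
    (hdom : ∀ (i u : ℕ) (hu : u ∈ B k i) (p : ↥(GV B (k+i))),
        p.val = (k, u) → ψ i ⟨u, hu⟩ ≤ φ (k+i) p) :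
    ∀ (n : ℕ) (p : ↥(GV B n)), candraw B M W m k β ψ n p.val ≤ φ n p := by
  classical
  set F : ∀ n, ℕ × ℕ → ℝ := fun n q => if h : q ∈ GV B n then φ n ⟨q, h⟩ else 0 with hF
  have hFnn : ∀ n q, 0 ≤ F n q := by
    intro n q
    rw [hF]
    dsimp only
    split
    · exact hφ.1 _ _
    · exact le_refl 0
  have hFeq : ∀ n (q : ↥(GV B n)), F n q.val = φ n q := by
    intro n q
    rw [hF]
    dsimp only
    rw [dif_pos q.prop]
  have hφsplit : ∀ n (p : ↥(GV B n)), φ n p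
      = (∑ w ∈ B 0 (n+1), GAraw M m W β n p.val (0,w) * F (n+1) (0,w))
        + ∑ j ∈ Finset.range (n+1), ∑ u ∈ B (j+1) (n-j),
            GAraw M m W β n p.val (j+1,u) * F (n+1) (j+1,u) := by
    intro n p
    rw [hφ.2 n p,
      ← sum_GV_split n (fun q => GAraw M m W β n p.val q * F (n+1) q),
      ← Finset.sum_coe_sort (GV B (n+1))
        (fun q => GAraw M m W β n p.val q * F (n+1) q)]
    refine Finset.sum_congr rfl fun q _ => ?_
    rw [hFeq (n+1) q]
    rfl
  have hdom' : ∀ (ℓ u : ℕ) (hq : ((k, u) : ℕ×ℕ) ∈ GV B ℓ),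
      psit B k ψ (ℓ - k) u ≤ φ ℓ ⟨(k,u), hq⟩ := by
    intro ℓ u hq
    obtain ⟨h1, h2, hu⟩ := (mem_GV_iff.1 hq).resolve_left
      (by rintro ⟨h, -⟩; simp at h; omega)
    simp only at h1 h2 hu
    obtain ⟨i, rfl⟩ : ∃ i, ℓ = k + i := ⟨ℓ - k, by omega⟩
    have hi : k + i - k = i := by omega
    rw [hi] at hu ⊢
    rw [psit, dif_pos hu]
    exact hdom i u hu ⟨(k,u), hq⟩ rfl
  have CL : ∀ D n (p : ↥(GV B n)), p.val.1 = 0 →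
      ∑ d ∈ Finset.range D, Pc B M W n p.val.2 d * Sv B m k β ψ (n+d) ≤ φ n p := by
    intro D
    induction D with
    | zero => intro n p _; simpa using hφ.1 n p
    | succ D ih =>
      intro n p h0
      rw [Finset.sum_range_succ', hφsplit n p]
      have step1 : ∑ d ∈ Finset.range D,
          Pc B M W n p.val.2 (d+1) * Sv B m k β ψ (n+(d+1))
          ≤ ∑ w ∈ B 0 (n+1), GAraw M m W β n p.val (0,w) * F (n+1) (0,w) := by
        have e0 : ∑ d ∈ Finset.range D,
            Pc B M W n p.val.2 (d+1) * Sv B m k β ψ (n+(d+1))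
            = ∑ w ∈ B 0 (n+1), (M 0 n p.val.2 w : ℝ) *
              ∑ d ∈ Finset.range D, Pc B M W (n+1) w d * Sv B m k β ψ ((n+1)+d) := by
          have : ∀ d ∈ Finset.range D,
              Pc B M W n p.val.2 (d+1) * Sv B m k β ψ (n+(d+1))
              = ∑ w ∈ B 0 (n+1), (M 0 n p.val.2 w : ℝ)
                  * (Pc B M W (n+1) w d * Sv B m k β ψ ((n+1)+d)) := by
            intro d _
            rw [Pc, Finset.sum_mul, show n + (d+1) = (n+1) + d from by omega]
            exact Finset.sum_congr rfl fun w _ => by ring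
          rw [Finset.sum_congr rfl this, Finset.sum_comm]
          exact Finset.sum_congr rfl fun w _ => by rw [Finset.mul_sum]
        rw [e0]
        refine Finset.sum_le_sum fun w hw => ?_
        have hmem : ((0, w) : ℕ×ℕ) ∈ GV B (n+1) := mem_GV_iff.2 (Or.inl ⟨rfl, hw⟩)
        have hGA : GAraw M m W β n p.val (0,w) = (M 0 n p.val.2 w : ℝ) := by
          rw [GAraw, if_pos ⟨h0, rfl⟩]
        have hFv : F (n+1) (0,w) = φ (n+1) ⟨(0,w), hmem⟩ := hFeq (n+1) ⟨(0,w), hmem⟩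
        rw [hGA, hFv]
        exact mul_le_mul_of_nonneg_left (ih (n+1) ⟨(0,w), hmem⟩ rfl) (by positivity)
      have step2 : Pc B M W n p.val.2 0 * Sv B m k β ψ (n+0)
          ≤ ∑ j ∈ Finset.range (n+1), ∑ u ∈ B (j+1) (n-j),
            GAraw M m W β n p.val (j+1,u) * F (n+1) (j+1,u) := by
        have hRHSnn : (0:ℝ) ≤ ∑ j ∈ Finset.range (n+1), ∑ u ∈ B (j+1) (n-j),
            GAraw M m W β n p.val (j+1,u) * F (n+1) (j+1,u) :=
          Finset.sum_nonneg fun j _ => Finset.sum_nonneg fun u _ =>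
            mul_nonneg (GAraw_nonneg _ _ _) (hFnn _ _)
        by_cases hvW : p.val.2 = W n
        · rw [Pc, if_pos hvW, one_mul, add_zero]
          by_cases hkn : k ≤ n + 1
          · have hmemj : k - 1 ∈ Finset.range (n+1) := Finset.mem_range.2 (by omega)
            have hsingle : (∑ u ∈ B (k-1+1) (n-(k-1)),
                GAraw M m W β n p.val (k-1+1,u) * F (n+1) (k-1+1,u))
                ≤ ∑ j ∈ Finset.range (n+1), ∑ u ∈ B (j+1) (n-j),
                  GAraw M m W β n p.val (j+1,u) * F (n+1) (j+1,u) :=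
              Finset.single_le_sum (f := fun j => ∑ u ∈ B (j+1) (n-j),
                  GAraw M m W β n p.val (j+1,u) * F (n+1) (j+1,u))
                (fun j _ => Finset.sum_nonneg fun u _ =>
                  mul_nonneg (GAraw_nonneg _ _ _) (hFnn _ _)) hmemj
            refine le_trans ?_ hsingle
            have e1 : k - 1 + 1 = k := by omega
            have e2 : n - (k-1) = n + 1 - k := by omega
            rw [e1, e2, Sv, if_pos hkn]
            refine Finset.sum_le_sum fun u hu => ?_
            have hmem : ((k, u) : ℕ×ℕ) ∈ GV B (n+1) :=
              mem_GV_iff.2 (Or.inr ⟨hk, by omega, by simpa using hu⟩)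
            have hGA : GAraw M m W β n p.val (k,u)
                = (m k (n+1-k) u : ℝ) * Real.exp (-β * kappa (n+1-k)) := by
              rw [GAraw, if_neg (by rintro ⟨-, h⟩; simp at h; omega),
                if_pos ⟨h0, by simp; omega⟩, if_pos hvW]
            have hFv : F (n+1) (k,u) = φ (n+1) ⟨(k,u), hmem⟩ := hFeq (n+1) ⟨(k,u), hmem⟩
            rw [hGA, hFv]
            have := hdom' (n+1) u hmem
            rw [show n + 1 - k = (n+1) - k from rfl]
            calc (m k (n+1-k) u : ℝ) * Real.exp (-β * kappa (n+1-k))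
                  * psit B k ψ (n+1-k) u
                = ((m k (n+1-k) u : ℝ) * Real.exp (-β * kappa (n+1-k)))
                  * psit B k ψ ((n+1)-k) u := by ring
              _ ≤ ((m k (n+1-k) u : ℝ) * Real.exp (-β * kappa (n+1-k)))
                  * φ (n+1) ⟨(k,u), hmem⟩ :=
                  mul_le_mul_of_nonneg_left this (by positivity)
          · rw [Sv, if_neg hkn]
            exact hRHSnn
        · rw [Pc, if_neg hvW, zero_mul]
          exact hRHSnn
      exact add_le_add step1 step2
  intro n p
  rcases mem_GV_iff.1 p.prop with ⟨h0, hv⟩ | ⟨ha, hb, hvk⟩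
  · rw [candraw, if_neg (by omega), if_pos h0, Tv]
    exact Summable.tsum_le_of_sum_range_le (g_summable hNpos hW hcs hψ hSb hv)
      (fun D => CL D n p h0)
  · by_cases hpk : p.val.1 = k
    · rw [candraw, if_pos hpk]
      have hpe : p.val = ((k, p.val.2) : ℕ×ℕ) := by
        rw [← hpk]
      have hq : ((k, p.val.2) : ℕ×ℕ) ∈ GV B n := hpe ▸ p.prop
      have h2 := hdom' n p.val.2 hq
      have hsub : (⟨(k, p.val.2), hq⟩ : ↥(GV B n)) = p := Subtype.ext hpe.symm
      rw [hsub] at h2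
      exact h2
    · rw [candraw, if_neg hpk, if_neg (by omega)]
      exact hφ.1 n p

end Lemmas7
section Lemmas8

variable {B : ℕ → ℕ → Finset ℕ} {M : ℕ → ℕ → ℕ → ℕ → ℕ} {v0k W : ℕ → ℕ}
  {m : ℕ → ℕ → ℕ → ℕ} {s t : ℕ → ℕ → ℝ} {k : ℕ} {β : ℝ}

lemma psit_comb {ψ φ : ∀ i, ↥(B k i) → ℝ} (c c' : ℝ) (i u : ℕ) :
    psit B k (c • ψ + c' • φ) i u = c * psit B k ψ i u + c' * psit B k φ i u := by
  unfold psit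
  split
  · simp [Pi.add_apply, Pi.smul_apply, smul_eq_mul]
  · simp

lemma Sv_comb {ψ φ : ∀ i, ↥(B k i) → ℝ} (c c' : ℝ) (ℓ : ℕ) :
    Sv B m k β (c • ψ + c' • φ) ℓ = c * Sv B m k β ψ ℓ + c' * Sv B m k β φ ℓ := by
  unfold Sv
  split
  · rw [Finset.mul_sum, Finset.mul_sum, ← Finset.sum_add_distrib]
    refine Finset.sum_congr rfl fun u _ => ?_
    rw [psit_comb]
    ring
  · simp

lemma psit_continuous (i u : ℕ) :
    Continuous fun ψ : ∀ i, ↥(B k i) → ℝ => psit B k ψ i u := by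
  by_cases h : u ∈ B k i
  · simp only [psit, dif_pos h]
    exact (continuous_apply _).comp (continuous_apply _)
  · simp only [psit, dif_neg h]
    exact continuous_const

lemma Sv_continuous (ℓ : ℕ) :
    Continuous fun ψ : ∀ i, ↥(B k i) → ℝ => Sv B m k β ψ ℓ := by
  by_cases h : k ≤ ℓ + 1
  · simp only [Sv, if_pos h]
    exact continuous_finset_sum _ fun u _ => continuous_const.mul (psit_continuous _ _)
  · simp only [Sv, if_neg h]
    exact continuous_const

lemma invlimit_comb {ψ φ : ∀ i, ↥(B k i) → ℝ}
    (hψ : ψ ∈ InvLimit (CompMat B M k)) (hφ : φ ∈ InvLimit (CompMat B M k))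
    {c c' : ℝ} (hc : 0 ≤ c) (hc' : 0 ≤ c') :
    c • ψ + c' • φ ∈ InvLimit (CompMat B M k) := by
  constructor
  · intro i v
    have := hψ.1 i v
    have := hφ.1 i v
    simp only [Pi.add_apply, Pi.smul_apply, smul_eq_mul]
    positivity
  · intro i v
    simp only [Pi.add_apply, Pi.smul_apply, smul_eq_mul]
    rw [hψ.2 i v, hφ.2 i v, Finset.mul_sum, Finset.mul_sum, ← Finset.sum_add_distrib]
    refine Finset.sum_congr rfl fun w _ => ?_
    try simp only [Pi.add_apply, Pi.smul_apply, smul_eq_mul]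
    ring

lemma Tv_comb
    (hNpos : ∀ k i x, x ∈ B k i → 0 < Ncnt B M v0k k i x)
    (hW : ∀ j, W j ∈ B 0 j)
    (hcs : Summable (cseq B M v0k W s t k β))
    {ψ φ : ∀ i, ↥(B k i) → ℝ}
    (hψ : ψ ∈ InvLimit (CompMat B M k)) (hφ : φ ∈ InvLimit (CompMat B M k))
    (hSbψ : ∀ ℓ, Ncnt B M v0k 0 ℓ (W ℓ) * Sv B m k β ψ ℓ
      ≤ cseq B M v0k W s t k β ℓ * psit B k ψ 0 (v0k k))
    (hSbφ : ∀ ℓ, Ncnt B M v0k 0 ℓ (W ℓ) * Sv B m k β φ ℓ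
      ≤ cseq B M v0k W s t k β ℓ * psit B k φ 0 (v0k k))
    (c c' : ℝ) {n v : ℕ} (hv : v ∈ B 0 n) :
    Tv B M W m k β (c • ψ + c' • φ) n v
      = c * Tv B M W m k β ψ n v + c' * Tv B M W m k β φ n v := by
  have h1 : Summable (fun d => c * (Pc B M W n v d * Sv B m k β ψ (n+d))) :=
    (g_summable hNpos hW hcs hψ hSbψ hv).mul_left c
  have h2 : Summable (fun d => c' * (Pc B M W n v d * Sv B m k β φ (n+d))) :=
    (g_summable hNpos hW hcs hφ hSbφ hv).mul_left c'
  calc Tv B M W m k β (c • ψ + c' • φ) n v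
      = ∑' d, (c * (Pc B M W n v d * Sv B m k β ψ (n+d))
          + c' * (Pc B M W n v d * Sv B m k β φ (n+d))) := by
        refine tsum_congr fun d => ?_
        rw [Sv_comb]
        ring
    _ = _ := by
        rw [Summable.tsum_add h1 h2, tsum_mul_left, tsum_mul_left, Tv, Tv]

lemma candraw_at_zero {n : ℕ} {q : ℕ × ℕ} (hk : 1 ≤ k) (h0 : q.1 = 0)
    (ψ : ∀ i, ↥(B k i) → ℝ) :
    candraw B M W m k β ψ n q = Tv B M W m k β ψ n q.2 := by
  rw [candraw, if_neg (by omega), if_pos h0]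

lemma candraw_at_k {n : ℕ} {q : ℕ × ℕ} (hq : q.1 = k) (ψ : ∀ i, ↥(B k i) → ℝ) :
    candraw B M W m k β ψ n q = psit B k ψ (n - k) q.2 := by
  rw [candraw, if_pos hq]

lemma candraw_at_other {n : ℕ} {q : ℕ × ℕ} (h1 : q.1 ≠ k) (h2 : q.1 ≠ 0)
    (ψ : ∀ i, ↥(B k i) → ℝ) :
    candraw B M W m k β ψ n q = 0 := by
  rw [candraw, if_neg h1, if_neg h2]

lemma candraw_comb
    (hk : 1 ≤ k)
    (hNpos : ∀ k i x, x ∈ B k i → 0 < Ncnt B M v0k k i x)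
    (hW : ∀ j, W j ∈ B 0 j)
    (hcs : Summable (cseq B M v0k W s t k β))
    {ψ φ : ∀ i, ↥(B k i) → ℝ}
    (hψ : ψ ∈ InvLimit (CompMat B M k)) (hφ : φ ∈ InvLimit (CompMat B M k))
    (hSbψ : ∀ ℓ, Ncnt B M v0k 0 ℓ (W ℓ) * Sv B m k β ψ ℓ
      ≤ cseq B M v0k W s t k β ℓ * psit B k ψ 0 (v0k k))
    (hSbφ : ∀ ℓ, Ncnt B M v0k 0 ℓ (W ℓ) * Sv B m k β φ ℓ
      ≤ cseq B M v0k W s t k β ℓ * psit B k φ 0 (v0k k))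
    (c c' : ℝ) {n : ℕ} (p : ↥(GV B n)) :
    candraw B M W m k β (c • ψ + c' • φ) n p.val
      = c * candraw B M W m k β ψ n p.val + c' * candraw B M W m k β φ n p.val := by
  rcases mem_GV_iff.1 p.prop with ⟨h0, hv⟩ | ⟨ha, hb, hvk⟩
  · simp only [candraw_at_zero hk h0]
    exact Tv_comb hNpos hW hcs hψ hφ hSbψ hSbφ c c' hv
  · by_cases hpk : p.val.1 = k
    · simp only [candraw_at_k hpk]
      exact psit_comb c c' _ _
    · simp only [candraw_at_other hpk (by omega)]
      ring

end Lemmas8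

/-- Lemma 4.7: for `β ∈ I_k` the map `ψ ↦ ψ̄` (minimal extension) from
`lim_j A^{(k,j)}` to `lim_j A^(j)(β)` is injective, continuous and affine. -/
theorem stmt_9
    (B : ℕ → ℕ → Finset ℕ) (M : ℕ → ℕ → ℕ → ℕ → ℕ) (v0k : ℕ → ℕ)
    (W : ℕ → ℕ) (m : ℕ → ℕ → ℕ → ℕ) (s t : ℕ → ℕ → ℝ) (I : ℕ → Set ℝ)
    (hBne : ∀ k i, (B k i).Nonempty)
    (hB0 : ∀ k, B k 0 = {v0k k})
    (hI : ∀ k, Convex ℝ (I k))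
    (hM : ∀ k i x, x ∈ B k i → ∃ y ∈ B k (i+1), 0 < M k i x y)
    (hNpos : ∀ k i x, x ∈ B k i → 0 < Ncnt B M v0k k i x)
    (hW : ∀ j, W j ∈ B 0 j) (hW0 : W 0 = v0k 0)
    (hspos : ∀ k j, 1 ≤ k → 1 ≤ j → 0 < s k j)
    (htpos : ∀ k j, 1 ≤ k → 1 ≤ j → 0 < t k j)
    (hst : ∀ k, 1 ≤ k → ∀ β : ℝ,
      ((Summable fun j : ℕ => s k (j+1) * Real.exp (((j : ℝ)+1) * β)) ∧
        (Summable fun j : ℕ => t k (j+1) * Real.exp (-(((j : ℝ)+1) * β)))) ↔ β ∈ I k)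
    (hm1 : ∀ k, 1 ≤ k → m k 0 (v0k k) = 1)
    (hmpos : ∀ k i u, u ∈ B k i → 0 < m k i u)
    (hmt : ∀ k j u, u ∈ B (k+1) (2*j+2) →
      (1/2) * (t (k+1) (j+1) * Ncnt B M v0k (k+1) (2*j+2) u
          / Ncnt B M v0k 0 (k+2*j+2) (W (k+2*j+2))) ≤ (m (k+1) (2*j+2) u : ℝ) ∧
      (m (k+1) (2*j+2) u : ℝ) ≤ t (k+1) (j+1) * Ncnt B M v0k (k+1) (2*j+2) u
          / Ncnt B M v0k 0 (k+2*j+2) (W (k+2*j+2)))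
    (hms : ∀ k j u, u ∈ B (k+1) (2*j+1) →
      (1/2) * (s (k+1) (j+1) * Ncnt B M v0k (k+1) (2*j+1) u
          / Ncnt B M v0k 0 (k+2*j+1) (W (k+2*j+1))) ≤ (m (k+1) (2*j+1) u : ℝ) ∧
      (m (k+1) (2*j+1) u : ℝ) ≤ s (k+1) (j+1) * Ncnt B M v0k (k+1) (2*j+1) u
          / Ncnt B M v0k 0 (k+2*j+1) (W (k+2*j+1)))
    (k : ℕ) (hk : 1 ≤ k) (β : ℝ) (hβ : β ∈ I k)
    (bar : (∀ i, ↥(B k i) → ℝ) → ∀ n, ↥(GV B n) → ℝ)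
    (hbar : ∀ ψ ∈ InvLimit (CompMat B M k),
      bar ψ ∈ InvLimit (GAmat B M m W β) ∧
      (∀ (i u : ℕ) (hu : u ∈ B k i) (p : ↥(GV B (k+i))),
        p.val = (k, u) → bar ψ (k+i) p = ψ i ⟨u, hu⟩) ∧
      (∀ (n : ℕ) (p : ↥(GV B n)), p.val.1 ≠ 0 → p.val.1 ≠ k → bar ψ n p = 0) ∧
      (∀ φ ∈ InvLimit (GAmat B M m W β),
        (∀ (i u : ℕ) (hu : u ∈ B k i) (p : ↥(GV B (k+i))),
          p.val = (k, u) → ψ i ⟨u, hu⟩ ≤ φ (k+i) p) →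
        ∀ (n : ℕ) (p : ↥(GV B n)), bar ψ n p ≤ φ n p)) :
    Set.InjOn bar (InvLimit (CompMat B M k)) ∧
    ContinuousOn bar (InvLimit (CompMat B M k)) ∧
    (∀ ψ ∈ InvLimit (CompMat B M k), ∀ φ ∈ InvLimit (CompMat B M k),
      ∀ c : ℝ, 0 ≤ c → c ≤ 1 →
        bar (c • ψ + (1 - c) • φ) = c • bar ψ + (1 - c) • bar φ) := by
  classical
  have hsum := (hst k hk β).mpr hβ
  have hcs : Summable (cseq B M v0k W s t k β) := cseq_summable hk hsum.1 hsum.2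
  have hSb : ∀ ψ : ∀ i, ↥(B k i) → ℝ, ψ ∈ InvLimit (CompMat B M k) →
      ∀ ℓ, Ncnt B M v0k 0 ℓ (W ℓ) * Sv B m k β ψ ℓ
        ≤ cseq B M v0k W s t k β ℓ * psit B k ψ 0 (v0k k) :=
    fun ψ hψ => Sv_bound hB0 hk hNpos hW hm1 hmt hms hψ
  have h0mem : v0k k ∈ B k 0 := by rw [hB0]; exact Finset.mem_singleton_self _
  -- identification of `bar` with the explicit formula
  have key : ∀ ψ ∈ InvLimit (CompMat B M k),
      bar ψ = fun n (p : ↥(GV B n)) => candraw B M W m k β ψ n p.val := by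
    intro ψ hψ
    obtain ⟨h1, h2, h3, h4⟩ := hbar ψ hψ
    funext n p
    refine le_antisymm ?_ ?_
    · refine h4 _ (cand_mem hk hNpos hW hcs hψ (hSb ψ hψ)) ?_ n p
      intro i u hu p' hp'
      have hcv : candraw B M W m k β ψ (k+i) p'.val = ψ i ⟨u, hu⟩ := by
        rw [hp', candraw_at_k (show ((k,u) : ℕ×ℕ).1 = k from rfl) ψ, show k + i - k = i from by omega]
        simp only [psit]
        rw [dif_pos hu]
      exact le_of_eq hcv.symm
    · exact cand_min hk hNpos hW hcs hψ (hSb ψ hψ) (bar ψ) h1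
        (fun i u hu p' hp' => le_of_eq (h2 i u hu p' hp').symm) n p
  refine ⟨?_, ?_, ?_⟩
  · -- injectivity
    intro ψ hψ φ hφ heq
    funext i u
    have hmem : ((k, u.val) : ℕ×ℕ) ∈ GV B (k+i) :=
      mem_GV_iff.2 (Or.inr ⟨hk, by show k ≤ k + i; omega, by
        show u.val ∈ B k (k + i - k)
        rw [show k + i - k = i from by omega]
        exact u.prop⟩)
    obtain ⟨-, h2ψ, -, -⟩ := hbar ψ hψ
    obtain ⟨-, h2φ, -, -⟩ := hbar φ hφ
    have e1 := h2ψ i u.val u.prop ⟨(k, u.val), hmem⟩ rfl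
    have e2 := h2φ i u.val u.prop ⟨(k, u.val), hmem⟩ rfl
    rw [heq] at e1
    have : ψ i ⟨u.val, u.prop⟩ = φ i ⟨u.val, u.prop⟩ := by rw [← e1, ← e2]
    simpa using this
  · -- continuity
    have hcoord : ∀ (n : ℕ) (p : ↥(GV B n)),
        ContinuousOn (fun ψ : ∀ i, ↥(B k i) → ℝ => candraw B M W m k β ψ n p.val)
          (InvLimit (CompMat B M k)) := by
      intro n p
      rcases mem_GV_iff.1 p.prop with ⟨h0, hv⟩ | ⟨ha, hb, hvk⟩
      · -- Br^0 vertex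
        intro ψ0 hψ0
        set R : ℝ := psit B k ψ0 0 (v0k k) + 1 with hR
        set tset : Set (∀ i, ↥(B k i) → ℝ) := {ψ | ψ 0 ⟨v0k k, h0mem⟩ < R} with htset
        have htopen : IsOpen tset :=
          isOpen_lt ((continuous_apply _).comp (continuous_apply _)) continuous_const
        have hψ0t : ψ0 ∈ tset := by
          show ψ0 0 ⟨v0k k, h0mem⟩ < R
          have he : psit B k ψ0 0 (v0k k) = ψ0 0 ⟨v0k k, h0mem⟩ := by
            simp only [psit]
            rw [dif_pos h0mem]
          rw [hR, ← he]
          linarith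
        have hconts : ContinuousOn
            (fun ψ : ∀ i, ↥(B k i) → ℝ => candraw B M W m k β ψ n p.val)
            (InvLimit (CompMat B M k) ∩ tset) := by
          rw [continuousOn_iff_continuous_restrict]
          have hres : (InvLimit (CompMat B M k) ∩ tset).domRestrict
              (fun ψ => candraw B M W m k β ψ n p.val)
              = fun x : ↥(InvLimit (CompMat B M k) ∩ tset) =>
                  ∑' d, Pc B M W n p.val.2 d * Sv B m k β (x : _) (n+d) := by
            funext x
            rw [Set.restrict_apply, candraw_at_zero hk h0, Tv]
          rw [hres]
          refine continuous_tsum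
            (u := fun d => cseq B M v0k W s t k β (n+d) * R) ?_ ?_ ?_
          · intro d
            exact continuous_const.mul ((Sv_continuous (n+d)).comp continuous_subtype_val)
          · have h1 : Summable (fun d => cseq B M v0k W s t k β (d + n)) :=
              (summable_nat_add_iff n).2 hcs
            exact (h1.mul_right R).congr fun d => by rw [add_comm d n]
          · intro d x
            have hx1 : (x : ∀ i, ↥(B k i) → ℝ) ∈ InvLimit (CompMat B M k) := x.prop.1
            have hx2 : (x : ∀ i, ↥(B k i) → ℝ) 0 ⟨v0k k, h0mem⟩ < R := x.prop.2
            have hgnn : 0 ≤ Pc B M W n p.val.2 d * Sv B m k β (x : _) (n+d) :=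
              mul_nonneg (Pc_nonneg _ _ _) (Sv_nonneg hx1 _)
            rw [Real.norm_eq_abs, abs_of_nonneg hgnn]
            have hb1 : Pc B M W n p.val.2 d * Sv B m k β (x : _) (n+d)
                ≤ cseq B M v0k W s t k β (n+d) * psit B k (x : _) 0 (v0k k) := by
              calc Pc B M W n p.val.2 d * Sv B m k β (x : _) (n+d)
                  ≤ Ncnt B M v0k 0 (n+d) (W (n+d)) * Sv B m k β (x : _) (n+d) :=
                    mul_le_mul_of_nonneg_right (Pc_le hW hNpos hv d) (Sv_nonneg hx1 _)
                _ ≤ _ := hSb _ hx1 (n+d)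
            refine hb1.trans ?_
            have hb2 : psit B k (x : _) 0 (v0k k) ≤ R := by
              have he : psit B k (x : _) 0 (v0k k)
                  = (x : ∀ i, ↥(B k i) → ℝ) 0 ⟨v0k k, h0mem⟩ := by
                simp only [psit]
                rw [dif_pos h0mem]
              rw [he]
              exact hx2.le
            exact mul_le_mul_of_nonneg_left hb2 (cseq_nonneg hk hspos htpos (n+d))
        exact (hconts.continuousWithinAt ⟨hψ0, hψ0t⟩).mono_of_mem_nhdsWithin
          (inter_mem_nhdsWithin _ (htopen.mem_nhds hψ0t))
      · by_cases hpk : p.val.1 = k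
        · have hmemB : p.val.2 ∈ B k (n - k) := hpk ▸ hvk
          have hfn : (fun ψ : ∀ i, ↥(B k i) → ℝ => candraw B M W m k β ψ n p.val)
              = fun ψ => ψ (n-k) ⟨p.val.2, hmemB⟩ := by
            funext ψ
            rw [candraw_at_k hpk ψ]
            simp only [psit]
            rw [dif_pos hmemB]
          rw [hfn]
          exact ((continuous_apply _).comp (continuous_apply _)).continuousOn
        · have hfn : (fun ψ : ∀ i, ↥(B k i) → ℝ => candraw B M W m k β ψ n p.val)
              = fun _ => (0:ℝ) := funext fun ψ => candraw_at_other hpk (by omega) ψ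
          rw [hfn]
          exact continuousOn_const
    have hcand : ContinuousOn
        (fun ψ => fun n (p : ↥(GV B n)) => candraw B M W m k β ψ n p.val)
        (InvLimit (CompMat B M k)) := by
      rw [continuousOn_iff_continuous_restrict]
      refine continuous_pi fun n => continuous_pi fun p => ?_
      exact (continuousOn_iff_continuous_restrict).1 (hcoord n p)
    exact hcand.congr (fun ψ hψ => key ψ hψ)
  · -- affine
    intro ψ hψ φ hφ c hc0 hc1
    have hcomb := invlimit_comb hψ hφ hc0 (by linarith : (0:ℝ) ≤ 1 - c)
    rw [key _ hcomb, key ψ hψ, key φ hφ]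
    funext n p
    simp only [Pi.add_apply, Pi.smul_apply, smul_eq_mul]
    exact candraw_comb hk hNpos hW hcs hψ hφ (hSb ψ hψ) (hSb φ hφ) c (1-c) p
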